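/- There exist ℓ > 0, a normalized profile function γ of length ℓ, a point t* ∈ (0,ℓ) with γ''(t*) > 0 (so the Gaussian curvature of S²_γ is negative somewhere and the surface is not convex), and a constant c < 2 such that |Γ(t) + γ'(t)| ≤ c·γ(t) for all t ∈ (0,ℓ); equivalently, m_γ := sup_{t∈(0,ℓ)} |Γ(t)+γ'(t)|/γ(t) < 2. (Consequently positive magnetic curvature is not necessary for all energy levels of (S²_γ, g_γ, μ_γ) to be of contact type.) -/

import Mathlib

/-- A profile function of length `ℓ`: a `C^∞` function `γ` with `γ(0) = γ(ℓ) = 0`,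
`γ > 0` on `(0,ℓ)`, `γ'(0) = 1`, `γ'(ℓ) = -1`, `|γ'| < 1` on `(0,ℓ)`, and all
even-order derivatives of `γ` vanishing at `t = 0` and `t = ℓ`. -/
structure IsProfileFunction (ℓ : ℝ) (γ : ℝ → ℝ) : Prop where
  ell_pos : 0 < ℓ
  smooth : ContDiff ℝ (⊤ : ℕ∞) γ
  zero_left : γ 0 = 0
  zero_right : γ ℓ = 0
  pos : ∀ t ∈ Set.Ioo 0 ℓ, 0 < γ t
  deriv_left : deriv γ 0 = 1
  deriv_right : deriv γ ℓ = -1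
  abs_deriv_lt_one : ∀ t ∈ Set.Ioo 0 ℓ, |deriv γ t| < 1
  even_deriv_left : ∀ n : ℕ, iteratedDeriv (2 * n) γ 0 = 0
  even_deriv_right : ∀ n : ℕ, iteratedDeriv (2 * n) γ ℓ = 0

/-- The profile function is normalized: `∫₀^ℓ γ(t) dt = 2`, so the associated surface
of revolution has area `4π`. -/
def IsNormalizedProfile (ℓ : ℝ) (γ : ℝ → ℝ) : Prop :=
  (∫ t in (0:ℝ)..ℓ, γ t) = 2

/-- `Γ(t) = -1 + ∫₀^t γ(s) ds`. -/
noncomputable def Gam (γ : ℝ → ℝ) (t : ℝ) : ℝ :=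
  -1 + ∫ s in (0:ℝ)..t, γ s

open Real

/-! ### Auxiliary construction

`gg t = sin t + δ * d/dt (sin² t · sin² (10 t))` with `δ = 1/2800` is a normalized profile
function of length `π` whose second derivative is positive at `t = 2π/3`, yet
`|Γ(t) + γ'(t)| ≤ (1/2)·γ(t)` on `(0, π)`. -/

noncomputable def gg : ℝ → ℝ := fun t =>
  sin t + (1/2800) * (2 * sin t * cos t * sin (10*t)^2 + 20 * sin t^2 * sin (10*t) * cos (10*t))

noncomputable def gg1 : ℝ → ℝ := fun t =>
  cos t + (1/2800) * (2*(cos t^2 - sin t^2)*sin (10*t)^2 + 80*sin t*cos t*sin (10*t)*cos (10*t)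
    + 200*sin t^2*(cos (10*t)^2 - sin (10*t)^2))

noncomputable def gg2 : ℝ → ℝ := fun t =>
  -sin t + (1/2800) * (-8*sin t*cos t*sin (10*t)^2 + 120*(cos t^2 - sin t^2)*sin (10*t)*cos (10*t)
    + 1200*sin t*cos t*(cos (10*t)^2 - sin (10*t)^2) - 8000*sin t^2*sin (10*t)*cos (10*t))

noncomputable def FF : ℝ → ℝ := fun t => -cos t + (1/2800) * (sin t^2 * sin (10*t)^2)
lemma hasDerivAt_sin10 (t : ℝ) : HasDerivAt (fun t => sin (10*t)) (10 * cos (10*t)) t := by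
  have h : HasDerivAt (fun x : ℝ => sin (10*x)) (cos (10*t) * (10*1)) t :=
    (Real.hasDerivAt_sin (10*t)).comp t ((hasDerivAt_id t).const_mul 10)
  convert h using 1; ring

lemma hasDerivAt_cos10 (t : ℝ) : HasDerivAt (fun t => cos (10*t)) (-10 * sin (10*t)) t := by
  have h : HasDerivAt (fun x : ℝ => cos (10*x)) (-sin (10*t) * (10*1)) t :=
    (Real.hasDerivAt_cos (10*t)).comp t ((hasDerivAt_id t).const_mul 10)
  convert h using 1; ring

lemma hgg (t : ℝ) : HasDerivAt gg (gg1 t) t := by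
  unfold gg gg1
  have h1 := Real.hasDerivAt_sin t
  have h2 := Real.hasDerivAt_cos t
  have h3 := hasDerivAt_sin10 t
  have h4 := hasDerivAt_cos10 t
  have H := h1.add (((((h1.const_mul 2).mul h2).mul (h3.pow 2)).add
    ((((h1.pow 2).const_mul 20).mul h3).mul h4)).const_mul (1/2800))
  refine H.congr_deriv ?_
  simp only [Pi.pow_apply, Pi.mul_apply, Pi.sub_apply]
  push_cast; ring

lemma hgg1 (t : ℝ) : HasDerivAt gg1 (gg2 t) t := by
  unfold gg1 gg2
  have h1 := Real.hasDerivAt_sin t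
  have h2 := Real.hasDerivAt_cos t
  have h3 := hasDerivAt_sin10 t
  have h4 := hasDerivAt_cos10 t
  have H := h2.add ((((((h2.pow 2).sub (h1.pow 2)).const_mul 2).mul (h3.pow 2)).add
      ((((h1.const_mul 80).mul h2).mul h3).mul h4) |>.add
      (((h1.pow 2).const_mul 200).mul ((h4.pow 2).sub (h3.pow 2)))).const_mul (1/2800))
  refine H.congr_deriv ?_
  simp only [Pi.pow_apply, Pi.mul_apply, Pi.sub_apply]
  push_cast; ring

lemma hFF (t : ℝ) : HasDerivAt FF (gg t) t := by
  unfold FF gg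
  have h1 := Real.hasDerivAt_sin t
  have h3 := hasDerivAt_sin10 t
  have H := (Real.hasDerivAt_cos t).neg.add (((h1.pow 2).mul (h3.pow 2)).const_mul (1/2800))
  refine H.congr_deriv ?_
  simp only [Pi.pow_apply, Pi.mul_apply, Pi.sub_apply]
  push_cast; ring

lemma gg_smooth : ContDiff ℝ (⊤ : ℕ∞) gg := by
  have hs : ContDiff ℝ (⊤ : ℕ∞) Real.sin := Real.contDiff_sin
  have hc : ContDiff ℝ (⊤ : ℕ∞) Real.cos := Real.contDiff_cos
  have h10 : ContDiff ℝ (⊤ : ℕ∞) (fun t : ℝ => (10:ℝ)*t) := contDiff_const.mul contDiff_id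
  have hS : ContDiff ℝ (⊤ : ℕ∞) (fun t : ℝ => Real.sin (10*t)) := hs.comp h10
  have hC : ContDiff ℝ (⊤ : ℕ∞) (fun t : ℝ => Real.cos (10*t)) := hc.comp h10
  unfold gg
  exact hs.add (contDiff_const.mul ((((contDiff_const.mul hs).mul hc).mul (hS.pow 2)).add
    (((contDiff_const.mul (hs.pow 2)).mul hS).mul hC)))

lemma deriv_gg : deriv gg = gg1 := funext fun t => (hgg t).deriv

lemma even_vanish (f : ℝ → ℝ) (hf : ContDiff ℝ (⊤ : ℕ∞) f) (a : ℝ)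
    (h : ∀ s, f (a + s) = -f (a - s)) (n : ℕ) : iteratedDeriv (2 * n) f a = 0 := by
  have key : ∀ m : ℕ, (∀ s, iteratedDeriv (2 * m) f (a + s) = -iteratedDeriv (2 * m) f (a - s)) := by
    intro m
    induction m with
    | zero => simpa using h
    | succ m ih =>
      set I := iteratedDeriv (2 * m) f with hI
      have e1 : ∀ s, deriv I (a + s) = deriv I (a - s) := by
        intro s
        have hfun : (fun u => I (a + u)) = fun u => -I (a - u) := funext fun u => ih u
        have := congrArg (fun g => deriv g s) hfun
        simp only [deriv_comp_const_add] at this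
        rw [show (fun u => -I (a - u)) = fun u => -(fun v => I (a - v)) u from rfl,
          deriv.fun_neg, deriv_comp_const_sub] at this
        simpa using this
      have e2 : ∀ s, deriv (deriv I) (a + s) = -deriv (deriv I) (a - s) := by
        intro s
        have hfun : (fun u => deriv I (a + u)) = fun u => deriv I (a - u) := funext fun u => e1 u
        have := congrArg (fun g => deriv g s) hfun
        simp only [deriv_comp_const_add, deriv_comp_const_sub] at this
        linarith [this]
      intro s
      have h2 : 2 * (m + 1) = (2 * m + 1) + 1 := by ring
      rw [h2, iteratedDeriv_succ, iteratedDeriv_succ]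
      exact e2 s
  have := key n 0
  simp only [add_zero, sub_zero] at this
  linarith [this]

lemma sin10pi : Real.sin (10 * π) = 0 := by
  have := Real.sin_nat_mul_pi 10
  simpa using this

lemma cos10pi : Real.cos (10 * π) = 1 := by
  have := Real.cos_nat_mul_two_pi 5
  rw [show ((5:ℕ):ℝ) * (2 * π) = 10 * π by push_cast; ring] at this
  exact this

lemma sin10_shift (s : ℝ) : Real.sin (10 * (π + s)) = Real.sin (10 * s) := by
  rw [show 10 * (π + s) = 10 * π + 10 * s by ring, Real.sin_add, sin10pi, cos10pi]
  ring

lemma cos10_shift (s : ℝ) : Real.cos (10 * (π + s)) = Real.cos (10 * s) := by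
  rw [show 10 * (π + s) = 10 * π + 10 * s by ring, Real.cos_add, sin10pi, cos10pi]
  ring

lemma gg_odd0 (s : ℝ) : gg (0 + s) = -gg (0 - s) := by
  simp only [zero_add, zero_sub]
  unfold gg
  rw [show 10 * (-s) = -(10*s) by ring]
  simp [Real.sin_neg, Real.cos_neg]
  ring

lemma gg_oddpi (s : ℝ) : gg (π + s) = -gg (π - s) := by
  unfold gg
  rw [sin10_shift, show π - s = π + (-s) by ring, sin10_shift, cos10_shift, cos10_shift,
    Real.sin_add, Real.cos_add, Real.sin_add, Real.cos_add,
    show 10 * (-s) = -(10*s) by ring]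
  simp [Real.sin_neg, Real.cos_neg]
  ring

lemma abs_sin_nat_mul (n : ℕ) (x : ℝ) : |Real.sin (n * x)| ≤ n * |Real.sin x| := by
  induction n with
  | zero => simp
  | succ n ih =>
    rw [show ((n+1:ℕ):ℝ) * x = n * x + x by push_cast; ring, Real.sin_add]
    calc |Real.sin (n*x) * Real.cos x + Real.cos (n*x) * Real.sin x|
        ≤ |Real.sin (n*x) * Real.cos x| + |Real.cos (n*x) * Real.sin x| := abs_add_le _ _
      _ ≤ |Real.sin (n*x)| * 1 + 1 * |Real.sin x| := by
          rw [abs_mul, abs_mul]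
          gcongr
          · exact Real.abs_cos_le_one x
          · exact Real.abs_cos_le_one _
      _ ≤ n * |Real.sin x| + 1 * |Real.sin x| := by
          nlinarith [abs_nonneg (Real.sin x)]
      _ = (n+1:ℕ) * |Real.sin x| := by push_cast; ring

lemma sin10_sq_le (x : ℝ) : Real.sin (10*x)^2 ≤ 100 * Real.sin x^2 := by
  have h := abs_sin_nat_mul 10 x
  rw [show ((10:ℕ):ℝ) = 10 by norm_num] at h
  nlinarith [abs_nonneg (Real.sin (10*x)), abs_nonneg (Real.sin x), sq_abs (Real.sin (10*x)),
    sq_abs (Real.sin x)]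

lemma sin_two_pi_div_three : Real.sin (2*π/3) = Real.sqrt 3 / 2 := by
  rw [show 2*π/3 = π - π/3 by ring, Real.sin_pi_sub, Real.sin_pi_div_three]

lemma cos_two_pi_div_three : Real.cos (2*π/3) = -(1/2) := by
  rw [show 2*π/3 = π - π/3 by ring, Real.cos_pi_sub, Real.cos_pi_div_three]

lemma sin6pi : Real.sin (3*(2*π)) = 0 := by
  have := Real.sin_nat_mul_pi 6
  rw [show ((6:ℕ):ℝ) * π = 3*(2*π) by push_cast; ring] at this
  exact this

lemma cos6pi : Real.cos (3*(2*π)) = 1 := by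
  have := Real.cos_nat_mul_two_pi 3
  rw [show ((3:ℕ):ℝ) * (2*π) = 3*(2*π) by push_cast; ring] at this
  exact this

lemma sin10_ts : Real.sin (10 * (2*π/3)) = Real.sqrt 3 / 2 := by
  rw [show 10 * (2*π/3) = 2*π/3 + 3*(2*π) by ring, Real.sin_add, sin6pi, cos6pi,
    sin_two_pi_div_three]
  ring

lemma cos10_ts : Real.cos (10 * (2*π/3)) = -(1/2) := by
  rw [show 10 * (2*π/3) = 2*π/3 + 3*(2*π) by ring, Real.cos_add, sin6pi, cos6pi,
    cos_two_pi_div_three]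
  ring

section Ineqs
variable (s c S C : ℝ)

lemma ineqA (hs : 0 < s) (hp : s^2+c^2=1) (hP : S^2+C^2=1) :
    (2788/2800)*s ≤ s + (1/2800)*(2*s*c*S^2 + 20*s^2*S*C) := by
  have hS1 : S^2 ≤ 1 := by nlinarith [sq_nonneg C]
  have t1 : 0 ≤ s*(1+c)*S^2 :=
    mul_nonneg (mul_nonneg hs.le (by nlinarith [sq_nonneg (1+c), sq_nonneg s])) (sq_nonneg S)
  have t2 : 0 ≤ s*(1 - S^2) := mul_nonneg hs.le (by linarith)
  have t3 : 0 ≤ s^2*(S+C)^2 := mul_nonneg (sq_nonneg s) (sq_nonneg _)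
  have hs2 : s^2 ≤ s := by nlinarith [sq_nonneg c]
  nlinarith [t1, t2, t3, hs2]

lemma ineqPP (hs : 0 < s) (hp : s^2+c^2=1) (hP : S^2+C^2=1) (hSs : S^2 ≤ 100*s^2) :
    2*(c^2-s^2)*S^2 + 80*s*c*S*C + 200*s^2*(C^2-S^2) ≤ 1200*s^2 ∧
    -(1200*s^2) ≤ 2*(c^2-s^2)*S^2 + 80*s*c*S*C + 200*s^2*(C^2-S^2) := by
  have hc2 : c^2 ≤ 1 := by nlinarith [sq_nonneg s]
  have hC2 : C^2 ≤ 1 := by nlinarith [sq_nonneg S]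
  have hcC : c^2*C^2 ≤ 1 := by nlinarith [sq_nonneg c, sq_nonneg C]
  have hsS : s^2*S^2 ≤ 100*(s^2*s^2) := by nlinarith [sq_nonneg s, hSs]
  have e1 : 0 ≤ (s*S)^2 * (1 - c^2*C^2) := mul_nonneg (sq_nonneg _) (by linarith)
  have hsq : (80*s*c*S*C)^2 ≤ (800*s^2)^2 := by nlinarith [e1, hsS, sq_nonneg (s*s)]
  have b2u : 80*s*c*S*C ≤ 800*s^2 := by
    nlinarith [hsq, sq_nonneg (800*s^2 + 80*s*c*S*C), sq_nonneg s]
  have b2l : -(800*s^2) ≤ 80*s*c*S*C := by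
    nlinarith [hsq, sq_nonneg (800*s^2 - 80*s*c*S*C), sq_nonneg s]
  have b1u : 2*(c^2-s^2)*S^2 ≤ 200*s^2 := by nlinarith [hSs, sq_nonneg S, sq_nonneg s]
  have b1l : -(200*s^2) ≤ 2*(c^2-s^2)*S^2 := by nlinarith [hSs, sq_nonneg S, sq_nonneg s]
  have b3u : 200*s^2*(C^2-S^2) ≤ 200*s^2 := by nlinarith [sq_nonneg s, sq_nonneg S, hC2]
  have hS1 : S^2 ≤ 1 := by nlinarith [sq_nonneg C]
  have b3l : -(200*s^2) ≤ 200*s^2*(C^2-S^2) := by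
    nlinarith [sq_nonneg s, sq_nonneg C, hS1]
  exact ⟨by linarith, by linarith⟩

lemma ineqB (hs : 0 < s) (hp : s^2+c^2=1)
    (hub : 2*(c^2-s^2)*S^2 + 80*s*c*S*C + 200*s^2*(C^2-S^2) ≤ 1200*s^2)
    (hlb : -(1200*s^2) ≤ 2*(c^2-s^2)*S^2 + 80*s*c*S*C + 200*s^2*(C^2-S^2)) :
    |c + (1/2800)*(2*(c^2-s^2)*S^2 + 80*s*c*S*C + 200*s^2*(C^2-S^2))| < 1 := by
  have hc1 : c < 1 := by nlinarith
  have hcm1 : -1 < c := by nlinarith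
  rw [abs_lt]
  constructor
  · nlinarith [hlb, mul_pos (show (0:ℝ) < 1 + c by linarith)
      (show (0:ℝ) < 1 - (3/7)*(1-c) by nlinarith)]
  · nlinarith [hub, mul_pos (show (0:ℝ) < 1 - c by linarith)
      (show (0:ℝ) < 1 - (3/7)*(1+c) by nlinarith)]

lemma ineqD (hs : 0 < s) (hs1 : s ≤ 1) (hp : s^2+c^2=1) (hP : S^2+C^2=1)
    (hub : 2*(c^2-s^2)*S^2 + 80*s*c*S*C + 200*s^2*(C^2-S^2) ≤ 1200*s^2)
    (hlb : -(1200*s^2) ≤ 2*(c^2-s^2)*S^2 + 80*s*c*S*C + 200*s^2*(C^2-S^2))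
    (hglb : (2788/2800)*s ≤ s + (1/2800)*(2*s*c*S^2 + 20*s^2*S*C)) :
    |(1/2800)*(s^2*S^2 + (2*(c^2-s^2)*S^2 + 80*s*c*S*C + 200*s^2*(C^2-S^2)))| ≤
      (1/2)*(s + (1/2800)*(2*s*c*S^2 + 20*s^2*S*C)) := by
  have hS1 : S^2 ≤ 1 := by nlinarith [sq_nonneg C]
  have hpu : s^2*S^2 ≤ s^2 := by nlinarith [sq_nonneg s]
  have hpl : 0 ≤ s^2*S^2 := mul_nonneg (sq_nonneg s) (sq_nonneg S)
  have hs2 : s^2 ≤ s := by nlinarith [sq_nonneg c]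
  rw [abs_le]
  constructor
  · nlinarith [hlb, hpl, hglb, hs2]
  · nlinarith [hub, hpu, hglb, hs2]

end Ineqs

lemma gg_cont : Continuous gg := gg_smooth.continuous

lemma integral_gg (a b : ℝ) : (∫ t in a..b, gg t) = FF b - FF a :=
  intervalIntegral.integral_eq_sub_of_hasDerivAt (fun t _ => hFF t)
    (gg_cont.intervalIntegrable a b)

lemma FF0 : FF 0 = -1 := by
  unfold FF
  norm_num

lemma Gam_gg (t : ℝ) : (-1 + ∫ u in (0:ℝ)..t, gg u) = FF t := by
  rw [integral_gg, FF0]; ring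

/-- There is a normalized profile function `γ` whose associated surface
is not convex (i.e. `γ'' t* > 0` for some `t* ∈ (0,ℓ)`, so the Gaussian curvature is
negative somewhere) and yet `|Γ t + γ' t| ≤ c γ t` on `(0,ℓ)` for some constant
`c < 2`, i.e. `m_γ < 2`. -/
theorem stmt_10 :
    ∃ ℓ : ℝ, ∃ γ : ℝ → ℝ, 0 < ℓ ∧ IsProfileFunction ℓ γ ∧ IsNormalizedProfile ℓ γ ∧
      (∃ ts ∈ Set.Ioo 0 ℓ, 0 < deriv (deriv γ) ts) ∧
      ∃ c : ℝ, c < 2 ∧ ∀ t ∈ Set.Ioo 0 ℓ, |Gam γ t + deriv γ t| ≤ c * γ t := by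
  refine ⟨π, gg, Real.pi_pos, ?_, ?_, ?_, ?_⟩
  · refine ⟨Real.pi_pos, gg_smooth, by norm_num [gg], ?_, ?_, ?_, ?_, ?_,
      even_vanish gg gg_smooth 0 gg_odd0, even_vanish gg gg_smooth π gg_oddpi⟩
    · norm_num [gg, Real.sin_pi]
    · intro t ht
      have hs := Real.sin_pos_of_pos_of_lt_pi ht.1 ht.2
      have h := ineqA (sin t) (cos t) (sin (10*t)) (cos (10*t)) hs
        (Real.sin_sq_add_cos_sq t) (Real.sin_sq_add_cos_sq (10*t))
      have h2 : (0:ℝ) < (2788/2800)*sin t := by positivity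
      simp only [gg]
      linarith
    · rw [deriv_gg]; norm_num [gg1]
    · rw [deriv_gg]; norm_num [gg1, Real.sin_pi, Real.cos_pi, sin10pi]
    · intro t ht
      have hs := Real.sin_pos_of_pos_of_lt_pi ht.1 ht.2
      obtain ⟨hub, hlb⟩ := ineqPP (sin t) (cos t) (sin (10*t)) (cos (10*t)) hs
        (Real.sin_sq_add_cos_sq t) (Real.sin_sq_add_cos_sq (10*t)) (sin10_sq_le t)
      rw [deriv_gg]
      simp only [gg1]
      exact ineqB (sin t) (cos t) (sin (10*t)) (cos (10*t)) hs
        (Real.sin_sq_add_cos_sq t) hub hlb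
  · show (∫ t in (0:ℝ)..π, gg t) = 2
    rw [integral_gg, FF0]
    norm_num [FF, Real.sin_pi, Real.cos_pi]
  · refine ⟨2*π/3, ⟨by positivity, by linarith [Real.pi_pos]⟩, ?_⟩
    have hd : deriv (deriv gg) (2*π/3) = gg2 (2*π/3) := by
      rw [deriv_gg]; exact (hgg1 _).deriv
    rw [hd]
    simp only [gg2]
    rw [sin_two_pi_div_three, cos_two_pi_div_three, sin10_ts, cos10_ts]
    have h3 : Real.sqrt 3 ^ 2 = 3 := Real.sq_sqrt (by norm_num)
    have h3' : 0 < Real.sqrt 3 := Real.sqrt_pos.mpr (by norm_num)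
    nlinarith [h3, h3', sq_nonneg (Real.sqrt 3)]
  · refine ⟨1/2, by norm_num, ?_⟩
    intro t ht
    have hs := Real.sin_pos_of_pos_of_lt_pi ht.1 ht.2
    obtain ⟨hub, hlb⟩ := ineqPP (sin t) (cos t) (sin (10*t)) (cos (10*t)) hs
      (Real.sin_sq_add_cos_sq t) (Real.sin_sq_add_cos_sq (10*t)) (sin10_sq_le t)
    have hglb := ineqA (sin t) (cos t) (sin (10*t)) (cos (10*t)) hs
      (Real.sin_sq_add_cos_sq t) (Real.sin_sq_add_cos_sq (10*t))
    have key : Gam gg t + deriv gg t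
        = (1/2800)*(sin t^2*sin (10*t)^2 + (2*(cos t^2 - sin t^2)*sin (10*t)^2
          + 80*sin t*cos t*sin (10*t)*cos (10*t)
          + 200*sin t^2*(cos (10*t)^2 - sin (10*t)^2))) := by
      have hGam : Gam gg t = FF t := Gam_gg t
      rw [hGam, deriv_gg]
      simp only [FF, gg1]
      ring
    rw [key]
    have key2 : (1/2 : ℝ) * gg t
        = (1/2)*(sin t + (1/2800)*(2*sin t*cos t*sin (10*t)^2
            + 20*sin t^2*sin (10*t)*cos (10*t))) := rfl
    rw [key2]
    exact ineqD (sin t) (cos t) (sin (10*t)) (cos (10*t)) hs (Real.sin_le_one t)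
      (Real.sin_sq_add_cos_sq t) (Real.sin_sq_add_cos_sq (10*t)) hub hlb hglb
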